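/- arXiv:0910.2062 — 2 statements merged into one kernel-verified Lean document; each statement's English description precedes it below -/
import Mathlib

section
/- If sequences α, β, γ, δ satisfy β_L = Σ_{r=0}^L α_r u_{L-r} v_{L+r} and γ_L = Σ_{r=L}^∞ δ_r u_{r-L} v_{r+L} (with suitable absolute convergence), then Σ_{L=0}^∞ α_L γ_L = Σ_{L=0}^∞ β_L δ_L. -/
def baileyEquiv : (Σ r : ℕ, Fin (r + 1)) ≃ ℕ × ℕ where
  toFun s := (s.2.val, s.1 - s.2.val)
  invFun p := ⟨p.1 + p.2, ⟨p.1, by omega⟩⟩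
  left_inv s := by
    obtain ⟨r, k⟩ := s
    have hk : k.val ≤ r := Nat.lt_succ_iff.mp k.isLt
    have h1 : k.val + (r - k.val) = r := by omega
    exact Sigma.ext h1 ((Fin.heq_ext_iff (by show k.val + (r - k.val) + 1 = r + 1; omega)).mpr rfl)
  right_inv p := by simp

/-- Bailey's transform. -/
theorem bailey_transform (u v α β γ δ : ℕ → ℂ)
    (hsum : Summable (fun p : ℕ × ℕ =>
      ‖α p.1 * (δ (p.1 + p.2) * u p.2 * v (p.1 + p.2 + p.1))‖))
    (hβ : ∀ L, β L = ∑ r ∈ Finset.range (L + 1), α r * u (L - r) * v (L + r))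
    (hγ : ∀ L, γ L = ∑' m : ℕ, δ (L + m) * u m * v (L + m + L)) :
    ∑' L : ℕ, α L * γ L = ∑' L : ℕ, β L * δ L := by
  set f : ℕ × ℕ → ℂ := fun p => α p.1 * (δ (p.1 + p.2) * u p.2 * v (p.1 + p.2 + p.1))
    with hf_def
  have hf : Summable f := Summable.of_norm hsum
  have hL : ∑' L : ℕ, α L * γ L = ∑' p : ℕ × ℕ, f p := by
    rw [Summable.tsum_prod hf]
    refine tsum_congr fun L => ?_
    rw [hγ L, ← tsum_mul_left]
  have hg : Summable (fun s : Σ r : ℕ, Fin (r + 1) => f (baileyEquiv s)) := (baileyEquiv.summable_iff).mpr hf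
  have hR : ∑' p : ℕ × ℕ, f p = ∑' L : ℕ, β L * δ L := by
    rw [← baileyEquiv.tsum_eq f, Summable.tsum_sigma hg]
    refine tsum_congr fun r => ?_
    rw [tsum_fintype]
    show ∑ b : Fin (r + 1), f (b.val, r - b.val) = β r * δ r
    rw [Fin.sum_univ_eq_sum_range (fun k => f (k, r - k)) (r + 1), hβ r, Finset.sum_mul]
    refine Finset.sum_congr rfl fun k hk => ?_
    have hkr : k ≤ r := Nat.lt_succ_iff.mp (Finset.mem_range.mp hk)
    simp only [hf_def]
    rw [Nat.add_sub_cancel' hkr]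
    ring
  rw [hL, hR]
end

section
/- The sequences α_0 = 1, α_L = (-1)^L q^{L(3L-1)/2} (1 + q^L) for L ≥ 1, and β_L = 1/(q;q)_L form a Bailey pair relative to a = 1; that is, for all L ≥ 0, 1/(q;q)_L = Σ_{r=0}^L α_r / ((q;q)_{L-r} (q;q)_{L+r}). -/
/-- Finite q-shifted factorial `(q;q)_n`. -/
noncomputable def qp (q : ℂ) (n : ℕ) : ℂ := ∏ k ∈ Finset.range n, (1 - q ^ (k + 1))

lemma qp_succ (q : ℂ) (n : ℕ) : qp q (n + 1) = qp q n * (1 - q ^ (n + 1)) :=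
  Finset.prod_range_succ _ _

lemma one_sub_pow_ne (q : ℂ) (hq1 : ‖q‖ < 1) (m : ℕ) : (1 : ℂ) - q ^ (m + 1) ≠ 0 := by
  intro h
  have h1 : q ^ (m + 1) = 1 := by linear_combination -h
  have : ‖q ^ (m + 1)‖ < 1 := by
    rw [norm_pow]
    exact pow_lt_one₀ (norm_nonneg q) hq1 (Nat.succ_ne_zero m)
  rw [h1] at this
  simp at this

lemma qp_ne_zero (q : ℂ) (hq1 : ‖q‖ < 1) (n : ℕ) : qp q n ≠ 0 := by
  induction n with
  | zero => simp [qp]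
  | succ n ih =>
    rw [qp_succ]
    exact mul_ne_zero ih (one_sub_pow_ne q hq1 n)

lemma even_pent (r : ℕ) : 2 ∣ r * (3 * r - 1) := by
  rcases Nat.even_or_odd r with ⟨c, hc⟩ | ⟨c, hc⟩
  · exact ⟨c * (3 * r - 1), by rw [hc]; ring⟩
  · have h : 3 * r - 1 = 2 * (3 * c + 1) := by omega
    exact ⟨r * (3 * c + 1), by rw [h]; ring⟩

lemma tri (s : ℕ) : (s + 1) * (3 * (s + 1) - 1) / 2 = s * (3 * s - 1) / 2 + (3 * s + 1) := by
  have h1 : 2 ∣ (s + 1) * (3 * (s + 1) - 1) := even_pent (s + 1)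
  have h2 : 2 ∣ s * (3 * s - 1) := even_pent s
  have h3 : (s + 1) * (3 * (s + 1) - 1) = s * (3 * s - 1) + (6 * s + 2) := by
    rcases s with _ | t
    · simp
    · have e1 : 3 * (t + 1 + 1) - 1 = 3 * t + 5 := by omega
      have e2 : 3 * (t + 1) - 1 = 3 * t + 2 := by omega
      rw [e1, e2]; ring
  omega

/-- The telescoping partial sums used in the induction step. -/
noncomputable def pP (q : ℂ) (M : ℕ) (r : ℕ) : ℂ :=
  (-1) ^ r * q ^ (r * (3 * r - 1) / 2 + (M - r) + 3 * r) / (qp q (M - r - 1) * qp q (M + r))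

noncomputable def pG (q : ℂ) (M : ℕ) (j : ℕ) : ℂ :=
  if 1 ≤ j ∧ j ≤ M then pP q M (j - 1) else 0

/-- Rogers' Bailey pair B(1) relative to `a = 1`. -/
theorem rogers_bailey_pair_B1 (q : ℂ) (hq0 : 0 < ‖q‖) (hq1 : ‖q‖ < 1) (L : ℕ) :
    (1 : ℂ) / qp q L =
      ∑ r ∈ Finset.range (L + 1),
        (if r = 0 then (1 : ℂ)
          else (-1) ^ r * q ^ (r * (3 * r - 1) / 2) * (1 + q ^ r)) /
        (qp q (L - r) * qp q (L + r)) := by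
  induction L with
  | zero => simp [qp]
  | succ L ih =>
    have hqp := qp_ne_zero q hq1
    have hos := one_sub_pow_ne q hq1
    -- per-term telescoping identity
    have key : ∀ r ∈ Finset.range (L + 2),
        (1 - q ^ (L + 1)) *
            ((if r = 0 then (1 : ℂ)
              else (-1) ^ r * q ^ (r * (3 * r - 1) / 2) * (1 + q ^ r)) /
              (qp q (L + 1 - r) * qp q (L + 1 + r)))
          - (if r ≤ L then
              (if r = 0 then (1 : ℂ)
                else (-1) ^ r * q ^ (r * (3 * r - 1) / 2) * (1 + q ^ r)) /
                (qp q (L - r) * qp q (L + r))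
            else 0)
          = pG q (L + 1) (r + 1) - pG q (L + 1) r := by
      intro r hr
      rw [Finset.mem_range] at hr
      rcases Nat.eq_zero_or_pos r with rfl | hr1
      · -- r = 0
        unfold pG pP
        rw [if_pos (show (0:ℕ) = 0 from rfl), if_pos (Nat.zero_le L),
          if_pos (show 1 ≤ 0 + 1 ∧ 0 + 1 ≤ L + 1 by omega),
          if_neg (show ¬ (1 ≤ 0 ∧ 0 ≤ L + 1) by omega)]
        norm_num
        rw [qp_succ q L]
        have hL := hqp L
        have hLs := hos L
        field_simp
        ring
      · rcases Nat.lt_or_ge r (L + 1) with hrL | hrM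
        · -- middle case : 1 ≤ r ≤ L
          obtain ⟨s, rfl⟩ : ∃ s, r = s + 1 := ⟨r - 1, by omega⟩
          obtain ⟨k, hk⟩ : ∃ k, L = k + s + 1 := ⟨L - s - 1, by omega⟩
          subst hk
          have hif : ¬ (s + 1 = 0) := by omega
          have hle : s + 1 ≤ k + s + 1 := by omega
          rw [if_neg hif, if_pos hle]
          unfold pG
          have c1 : 1 ≤ s + 1 + 1 ∧ s + 1 + 1 ≤ k + s + 1 + 1 := by omega
          have c2 : 1 ≤ s + 1 ∧ s + 1 ≤ k + s + 1 + 1 := by omega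
          rw [if_pos c1, if_pos c2]
          unfold pP
          simp only [Nat.add_sub_cancel]
          -- index normalizations
          have i1 : k + s + 1 + 1 - (s + 1) = k + 1 := by omega
          have i2 : k + s + 1 + 1 + (s + 1) = k + 2 * s + 2 + 1 := by omega
          have i3 : k + s + 1 - (s + 1) = k := by omega
          have i4 : k + s + 1 + (s + 1) = k + 2 * s + 2 := by omega
          have i5 : k + s + 1 + 1 - (s + 1) - 1 = k := by omega
          have i6 : k + s + 1 + 1 - s - 1 = k + 1 := by omega
          have i7 : k + s + 1 + 1 + s = k + 2 * s + 2 := by omega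
          rw [i5, i6, i7, i1, i2, i3, i4]
          -- exponent normalizations
          have e1 : (s + 1) * (3 * (s + 1) - 1) / 2 + (k + 1) + 3 * (s + 1) =
              (s + 1) * (3 * (s + 1) - 1) / 2 + (k + 3 * s + 4) := by omega
          have e2 : s * (3 * s - 1) / 2 + (k + s + 1 + 1 - s) + 3 * s =
              (s + 1) * (3 * (s + 1) - 1) / 2 + (k + 1) := by
            have := tri s
            omega
          rw [e1, e2]
          generalize (s + 1) * (3 * (s + 1) - 1) / 2 = E
          rw [qp_succ q k, qp_succ q (k + 2 * s + 2)]
          have h1 := hqp k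
          have h2 := hqp (k + 2 * s + 2)
          have h3 := hos k
          have h4 := hos (k + 2 * s + 2)
          field_simp
          ring
        · -- r = L + 1
          have hrM' : r = L + 1 := by omega
          subst hrM'
          have hif : ¬ (L + 1 = 0) := by omega
          have hle : ¬ (L + 1 ≤ L) := by omega
          rw [if_neg hif, if_neg hle]
          unfold pG
          have c1 : ¬ (1 ≤ L + 1 + 1 ∧ L + 1 + 1 ≤ L + 1) := by omega
          have c2 : 1 ≤ L + 1 ∧ L + 1 ≤ L + 1 := by omega
          rw [if_neg c1, if_pos c2]
          unfold pP
          simp only [Nat.add_sub_cancel]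
          have i1 : L + 1 - (L + 1) = 0 := by omega
          have i2 : L + 1 + (L + 1) = 2 * L + 1 + 1 := by omega
          have i3 : L + 1 - L - 1 = 0 := by omega
          have i4 : L + 1 + L = 2 * L + 1 := by omega
          rw [i1, i2, i3, i4]
          have e2 : L * (3 * L - 1) / 2 + (L + 1 - L) + 3 * L =
              (L + 1) * (3 * (L + 1) - 1) / 2 := by
            have := tri L
            omega
          rw [e2]
          generalize hE : (L + 1) * (3 * (L + 1) - 1) / 2 = E
          rw [qp_succ q (2 * L + 1)]
          have h2 := hqp (2 * L + 1)
          have h4 : (1 : ℂ) - q ^ (L + 1) * q ^ (L + 1) ≠ 0 := by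
            rw [← pow_add, show (L + 1) + (L + 1) = 2 * L + 1 + 1 from by omega]
            exact hos (2 * L + 1)
          have h4n : (1 : ℂ) - q ^ 2 * q ^ (L * 2) ≠ 0 := by
            rw [← pow_add, show 2 + L * 2 = 2 * L + 1 + 1 from by omega]
            exact hos (2 * L + 1)
          have hqp0 : qp q 0 = 1 := by simp [qp]
          rw [hqp0, sub_zero, zero_sub, one_mul, one_mul, ← mul_div_assoc, ← neg_div,
            div_eq_div_iff (mul_ne_zero h2 (hos (2 * L + 1))) h2]
          ring
    -- sum the telescoping identity
    have hsum := Finset.sum_congr rfl key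
    rw [Finset.sum_sub_distrib, ← Finset.mul_sum, Finset.sum_range_sub (pG q (L + 1))] at hsum
    have hG1 : pG q (L + 1) (L + 2) = 0 := by
      unfold pG
      rw [if_neg (by omega)]
    have hG0 : pG q (L + 1) 0 = 0 := by
      unfold pG
      rw [if_neg (by omega)]
    rw [hG1, hG0, sub_zero] at hsum
    have hsecond : ∑ r ∈ Finset.range (L + 2),
        (if r ≤ L then
          (if r = 0 then (1 : ℂ)
            else (-1) ^ r * q ^ (r * (3 * r - 1) / 2) * (1 + q ^ r)) /
            (qp q (L - r) * qp q (L + r))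
        else 0) = 1 / qp q L := by
      rw [Finset.sum_range_succ, if_neg (by omega), add_zero]
      have hcg : ∀ r ∈ Finset.range (L + 1),
          (if r ≤ L then
            (if r = 0 then (1 : ℂ)
              else (-1) ^ r * q ^ (r * (3 * r - 1) / 2) * (1 + q ^ r)) /
              (qp q (L - r) * qp q (L + r))
          else 0) =
          (if r = 0 then (1 : ℂ)
            else (-1) ^ r * q ^ (r * (3 * r - 1) / 2) * (1 + q ^ r)) /
            (qp q (L - r) * qp q (L + r)) := by
        intro r hr
        rw [Finset.mem_range] at hr
        rw [if_pos (by omega)]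
      rw [Finset.sum_congr rfl hcg]
      exact ih.symm
    rw [hsecond] at hsum
    -- conclude
    have hqpL := qp_ne_zero q hq1 L
    have hosL := one_sub_pow_ne q hq1 L
    rw [qp_succ q L]
    rw [sub_eq_zero] at hsum
    field_simp at hsum
    rw [eq_comm, eq_div_iff (mul_ne_zero hqpL hosL)]
    linear_combination hsum
end
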